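/- Let (Ω, 𝓕, P) be a probability space and (W_i)_{i≥1} a sequence of independent, identically distributed real-valued random variables whose common law μ is symmetric (μ is invariant under x ↦ −x) and atomless (has no atoms). Set S_k := ∑_{i=1}^k W_i. Then for every natural number n, P(S_1 < 0, S_2 < 0, …, S_n < 0, and S_{n+1} ≥ 0) = (Nat.catalan n) / 2^(2n+1), where Nat.catalan n is the n-th Catalan number. -/

import Mathlib

open MeasureTheory ProbabilityTheory Finset
open scoped ENNReal

noncomputable def cb (k : ℕ) : ℝ := (Nat.centralBinom k : ℝ)

lemma cb_pos (k : ℕ) : 0 < cb k := by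
  simp only [cb]; exact_mod_cast Nat.centralBinom_pos k

lemma cb_rec (k : ℕ) : (k+1 : ℝ) * cb (k+1) = 2 * (2*k+1) * cb k := by
  have h := Nat.succ_mul_centralBinom_succ k
  have h' : ((k + 1) * (k+1).centralBinom : ℝ) = ((2 * (2 * k + 1)) * k.centralBinom : ℝ) := by
    exact_mod_cast congrArg (fun x : ℕ => (x : ℝ)) h
  simp only [cb]; push_cast at h' ⊢; linarith

lemma cb_conv (n : ℕ) : ∑ k ∈ range (n+1), cb k * cb (n - k) = 4 ^ n := by
  induction n with
  | zero => simp [cb, Nat.centralBinom_zero]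
  | succ n ih =>
    -- U m = ∑ k ∈ range (m+1), k * cb k * cb (m-k),  2 * U m = m * T m
    have hU : ∀ m : ℕ, 2 * (∑ k ∈ range (m+1), (k:ℝ) * cb k * cb (m-k))
        = m * ∑ k ∈ range (m+1), cb k * cb (m-k) := by
      intro m
      have hrefl : (∑ k ∈ range (m+1), (k:ℝ) * cb k * cb (m-k))
          = ∑ k ∈ range (m+1), ((m-k : ℕ):ℝ) * cb (m-k) * cb k := by
        rw [← Finset.sum_range_reflect (fun k => (k:ℝ) * cb k * cb (m-k)) (m+1)]
        apply Finset.sum_congr rfl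
        intro k hk
        simp only [mem_range] at hk
        have hk' : k ≤ m := Nat.lt_succ_iff.mp hk
        have h1 : m + 1 - 1 - k = m - k := by omega
        have h2 : m - (m - k) = k := by omega
        rw [h1, h2]
      have : 2 * (∑ k ∈ range (m+1), (k:ℝ) * cb k * cb (m-k))
          = ∑ k ∈ range (m+1), (((k:ℝ) + ((m-k : ℕ):ℝ)) * (cb k * cb (m-k))) := by
        rw [two_mul]
        nth_rewrite 2 [hrefl]
        rw [← Finset.sum_add_distrib]
        apply Finset.sum_congr rfl
        intro k hk
        ring
      rw [this]
      rw [Finset.mul_sum]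
      apply Finset.sum_congr rfl
      intro k hk
      simp only [mem_range] at hk
      have hk' : k ≤ m := Nat.lt_succ_iff.mp hk
      have : ((k:ℝ) + ((m-k : ℕ):ℝ)) = (m:ℝ) := by
        have : ((m - k : ℕ) : ℝ) = (m : ℝ) - k := by
          push_cast [Nat.cast_sub hk']; ring
        rw [this]; ring
      rw [this]
    -- key: ∑_{k=0}^{n} (k+1) cb(k+1) cb(n-k) = 2(n+1) T n, and LHS = U (n+1)
    have key : ∑ k ∈ range (n+1), ((k:ℝ)+1) * cb (k+1) * cb (n-k)
        = 2 * (n+1) * ∑ k ∈ range (n+1), cb k * cb (n-k) := by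
      have h1 : ∑ k ∈ range (n+1), ((k:ℝ)+1) * cb (k+1) * cb (n-k)
          = ∑ k ∈ range (n+1), (2 * (2*(k:ℝ)+1)) * (cb k * cb (n-k)) := by
        apply Finset.sum_congr rfl
        intro k hk
        have := cb_rec k
        calc ((k:ℝ)+1) * cb (k+1) * cb (n-k) = (((k:ℝ)+1) * cb (k+1)) * cb (n-k) := by ring
          _ = (2 * (2*(k:ℝ)+1) * cb k) * cb (n-k) := by rw [this]
          _ = (2 * (2*(k:ℝ)+1)) * (cb k * cb (n-k)) := by ring
      rw [h1]
      have h2 : ∑ k ∈ range (n+1), (2 * (2*(k:ℝ)+1)) * (cb k * cb (n-k))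
          = 4 * ∑ k ∈ range (n+1), (k:ℝ) * cb k * cb (n-k)
            + 2 * ∑ k ∈ range (n+1), cb k * cb (n-k) := by
        rw [Finset.mul_sum, Finset.mul_sum, ← Finset.sum_add_distrib]
        apply Finset.sum_congr rfl
        intro k _; ring
      rw [h2]
      linear_combination 2 * hU n
    -- LHS of key equals U (n+1)
    have hL : ∑ k ∈ range (n+2), (k:ℝ) * cb k * cb (n+1-k)
        = ∑ k ∈ range (n+1), ((k:ℝ)+1) * cb (k+1) * cb (n-k) := by
      rw [Finset.sum_range_succ' (fun k => (k:ℝ) * cb k * cb (n+1-k)) (n+1)]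
      simp only [Nat.cast_zero, zero_mul, add_zero]
      apply Finset.sum_congr rfl
      intro k hk
      have : n + 1 - (k+1) = n - k := by omega
      rw [this]
      push_cast
      ring
    have h2U := hU (n+1)
    rw [hL, key, ih] at h2U
    have hne : ((n:ℝ)+1) ≠ 0 := by positivity
    have : ((n:ℝ)+1) * ∑ k ∈ range (n+1+1), cb k * cb (n+1-k)
        = ((n:ℝ)+1) * 4 ^ (n+1) := by
      push_cast at h2U ⊢
      linear_combination -h2U
    have := mul_left_cancel₀ hne this
    simpa using this

noncomputable def cc (k : ℕ) : ℝ := cb k / 4 ^ k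

lemma cc_zero : cc 0 = 1 := by simp [cc, cb, Nat.centralBinom_zero]

lemma cc_conv (n : ℕ) : ∑ k ∈ range (n+1), cc k * cc (n-k) = 1 := by
  have h : ∀ k ∈ range (n+1), cc k * cc (n-k) = cb k * cb (n-k) / 4 ^ n := by
    intro k hk
    simp only [Finset.mem_range] at hk
    have hk' : k ≤ n := Nat.lt_succ_iff.mp hk
    have h4 : (4:ℝ) ^ k * 4 ^ (n-k) = 4 ^ n := by
      rw [← pow_add]
      congr 1
      omega
    simp only [cc]
    rw [div_mul_div_comm, h4]
  rw [Finset.sum_congr rfl h, ← Finset.sum_div, cb_conv]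
  have : (4:ℝ) ^ n ≠ 0 := by positivity
  field_simp

lemma conv_unique (r : ℕ → ℝ) (h0 : r 0 = 1)
    (h : ∀ n, ∑ k ∈ range (n+1), r k * r (n-k) = 1) : ∀ n, r n = cc n := by
  intro n
  induction n using Nat.strong_induction_on with
  | _ n ih =>
    match n with
    | 0 => simpa [h0] using cc_zero.symm
    | (m+1) =>
      have hr := h (m+1)
      have hc := cc_conv (m+1)
      rw [Finset.sum_range_succ] at hr hc
      rw [Finset.sum_range_succ'] at hr hc
      have hmid : ∑ i ∈ range m, r (i+1) * r (m+1-(i+1))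
          = ∑ i ∈ range m, cc (i+1) * cc (m+1-(i+1)) := by
        apply Finset.sum_congr rfl
        intro i hi
        simp only [Finset.mem_range] at hi
        rw [ih (i+1) (by omega), ih (m+1-(i+1)) (by omega)]
      simp only [Nat.sub_self, Nat.sub_zero] at hr hc
      rw [h0] at hr
      rw [cc_zero] at hc
      rw [hmid] at hr
      linarith

lemma cc_diff (n : ℕ) : cc n - cc (n+1) = (catalan n : ℝ) / 2 ^ (2*n+1) := by
  have hcat : ((n:ℝ)+1) * (catalan n : ℝ) = cb n := by
    have := succ_mul_catalan_eq_centralBinom n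
    simp only [cb]; exact_mod_cast this
  have hrec := cb_rec n
  have hn1 : ((n:ℝ)+1) ≠ 0 := by positivity
  have h5 : 4 * cb n - cb (n+1) = 2 * (catalan n : ℝ) := by
    apply mul_left_cancel₀ hn1
    linear_combination -hrec - 2*hcat
  have h2 : (2:ℝ) ^ (2*n+1) = 2 * 4 ^ n := by
    rw [pow_succ, pow_mul]
    norm_num
    ring
  have hd : cc n - cc (n+1) = (4 * cb n - cb (n+1)) / (4 ^ n * 4) := by
    simp only [cc, pow_succ]
    field_simp
  rw [hd, h5, h2]
  rw [div_eq_div_iff (by positivity) (by positivity)]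
  ring

/-- partial sum of first `r` coordinates of a tuple -/
def pSum (m : ℕ) (x : Fin m → ℝ) (r : ℕ) : ℝ := ∑ i : Fin m, if (i:ℕ) < r then x i else 0

def negSet (m : ℕ) : Set (Fin m → ℝ) := {x | ∀ r, 1 ≤ r → r ≤ m → pSum m x r < 0}

lemma measurable_pSum (m r : ℕ) : Measurable (fun x => pSum m x r) := by
  unfold pSum
  apply Finset.measurable_sum
  intro i _
  by_cases h : (i:ℕ) < r
  · simpa [h] using measurable_pi_apply i
  · simpa [h] using measurable_const

lemma measurableSet_negSet (m : ℕ) : MeasurableSet (negSet m) := by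
  have : negSet m = ⋂ r, ⋂ (_ : 1 ≤ r), ⋂ (_ : r ≤ m), {x | pSum m x r < 0} := by
    ext x; simp [negSet]
  rw [this]
  exact MeasurableSet.iInter fun r => MeasurableSet.iInter fun _ =>
    MeasurableSet.iInter fun _ => measurableSet_lt (measurable_pSum m r) measurable_const

lemma pSum_eq (m r : ℕ) (hr : r ≤ m) (g : ℕ → ℝ) :
    pSum m (fun i => g (i:ℕ)) r = ∑ i ∈ Finset.range r, g i := by
  unfold pSum
  rw [Fin.sum_univ_eq_sum_range (fun j => if j < r then g j else 0) m, ← Finset.sum_filter]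
  congr 1
  ext j
  simp only [Finset.mem_filter, Finset.mem_range]
  omega

lemma rev_sum (g : ℕ → ℝ) (k : ℕ) : ∀ r, r ≤ k →
    ∑ j ∈ Finset.range r, g (k-1-j) = ∑ t ∈ Finset.Ico (k-r) k, g t := by
  intro r
  induction r with
  | zero => simp
  | succ r ih =>
    intro hr
    rw [Finset.sum_range_succ, ih (by omega)]
    rw [Finset.sum_eq_sum_Ico_succ_bot (show k-(r+1) < k by omega) g]
    have h1 : k - (r+1) + 1 = k - r := by omega
    have h2 : k - (r+1) = k - 1 - r := by omega
    rw [h1, h2]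
    ring

/-- iid family: the joint law of any injective finite selection is the product measure -/
lemma iid_map_pi {Ω : Type*} [MeasurableSpace Ω] (P : Measure Ω) [IsProbabilityMeasure P]
    (μ : Measure ℝ) [IsProbabilityMeasure μ]
    (X : ℕ → Ω → ℝ) (hmeas : ∀ i, Measurable (X i))
    (hdist : ∀ i, P.map (X i) = μ)
    (hindep : iIndepFun X P)
    (m : ℕ) (hm : m ≠ 0) (f : Fin m → ℕ) (hf : Function.Injective f) :
    P.map (fun ω (i : Fin m) => X (f i) ω) = Measure.pi (fun _ => μ) := by
  haveI : Nonempty (Fin m) := ⟨⟨0, Nat.pos_of_ne_zero hm⟩⟩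
  have hT : Measurable (fun ω (i : Fin m) => X (f i) ω) :=
    measurable_pi_lambda _ (fun i => hmeas (f i))
  refine (Measure.pi_eq fun s hs => ?_).symm
  rw [Measure.map_apply hT (MeasurableSet.univ_pi hs)]
  classical
  set sets : ℕ → Set ℝ := fun j => s (Function.invFun f j) with hsets
  have hinv : ∀ i : Fin m, Function.invFun f (f i) = i :=
    fun i => Function.leftInverse_invFun hf i
  have hpre : (fun ω (i : Fin m) => X (f i) ω) ⁻¹' (Set.univ.pi s)
      = ⋂ j ∈ Finset.image f Finset.univ, X j ⁻¹' sets j := by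
    ext ω
    simp only [Set.mem_preimage, Set.mem_pi, Set.mem_univ, forall_true_left,
      Set.mem_iInter, Finset.mem_image, Finset.mem_univ, true_and]
    constructor
    · rintro h j ⟨i, rfl⟩
      rw [hsets]; simp only [hinv i]; exact h i
    · intro h i
      have := h (f i) ⟨i, rfl⟩
      rw [hsets] at this; simpa [hinv i] using this
  rw [hpre]
  rw [hindep.measure_inter_preimage_eq_mul (Finset.image f Finset.univ)
    (sets := sets) (fun j _ => by rw [hsets]; exact hs _)]
  rw [Finset.prod_image (fun a _ b _ h => hf h)]
  apply Finset.prod_congr rfl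
  intro i _
  rw [hsets]; simp only [hinv i]
  rw [← hdist (f i), Measure.map_apply (hmeas (f i)) (hs i)]

/-- bridging: probability of sign-flipped, reindexed walk staying negative -/
lemma prob_negSet {Ω : Type*} [MeasurableSpace Ω] (P : Measure Ω) [IsProbabilityMeasure P]
    (μ : Measure ℝ) [IsProbabilityMeasure μ]
    (hsym : μ.map (fun x => -x) = μ)
    (W : ℕ → Ω → ℝ) (hmeas : ∀ i, Measurable (W i))
    (hdist : ∀ i, P.map (W i) = μ)
    (hindep : iIndepFun W P)
    (s : ℝ) (hs : s = 1 ∨ s = -1)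
    (m : ℕ) (hm : m ≠ 0) (f : Fin m → ℕ) (hf : Function.Injective f) :
    P ((fun ω (i : Fin m) => s * W (f i) ω) ⁻¹' negSet m)
      = Measure.pi (fun _ : Fin m => μ) (negSet m) := by
  have hmeas' : ∀ i, Measurable (fun ω => s * W i ω) :=
    fun i => (hmeas i).const_mul s
  have hdist' : ∀ i, P.map (fun ω => s * W i ω) = μ := by
    intro i
    rcases hs with rfl | rfl
    · simpa using hdist i
    · have : (fun ω => (-1:ℝ) * W i ω) = (fun x : ℝ => -x) ∘ W i := by
        funext ω; simp
      rw [this, ← Measure.map_map measurable_neg (hmeas i), hdist i, hsym]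
  have hindep' : iIndepFun (fun i ω => s * W i ω) P := by
    have := hindep.comp (fun _ (x : ℝ) => s * x) (fun _ => measurable_const_mul s)
    exact this
  have := iid_map_pi P μ (fun i ω => s * W i ω) hmeas' hdist' hindep' m hm f hf
  have hT : Measurable (fun ω (i : Fin m) => s * W (f i) ω) :=
    measurable_pi_lambda _ (fun i => hmeas' (f i))
  rw [← this, Measure.map_apply hT (measurableSet_negSet m)]

section Events
variable {Ω : Type*} [MeasurableSpace Ω] (W : ℕ → Ω → ℝ)

def Qset (r : ℕ) : Set Ω := {ω | ∀ k, 1 ≤ k → k ≤ r → ∑ i ∈ Finset.range k, W i ω < 0}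
def Aset (k : ℕ) : Set Ω := {ω | ∀ i, i < k → 0 < ∑ t ∈ Finset.Ico i k, W t ω}
def Bset (k n : ℕ) : Set Ω := {ω | ∀ j, k < j → j ≤ n → ∑ t ∈ Finset.Ico k j, W t ω < 0}

lemma Qset_eq (r : ℕ) :
    Qset W r = (fun ω (i : Fin r) => (1:ℝ) * W (i:ℕ) ω) ⁻¹' negSet r := by
  ext ω
  simp only [Qset, Set.mem_setOf_eq, Set.mem_preimage, negSet]
  apply forall_congr'
  intro k
  constructor
  · intro h h1 h2
    rw [pSum_eq r k h2 (fun t => 1 * W t ω)]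
    simpa using h h1 h2
  · intro h h1 h2
    have := h h1 h2
    rw [pSum_eq r k h2 (fun t => 1 * W t ω)] at this
    simpa using this

lemma Aset_eq (k : ℕ) :
    Aset W k = (fun ω (i : Fin k) => (-1:ℝ) * W (k-1-(i:ℕ)) ω) ⁻¹' negSet k := by
  ext ω
  simp only [Aset, Set.mem_setOf_eq, Set.mem_preimage, negSet]
  have key : ∀ r, r ≤ k → pSum k (fun i : Fin k => (-1:ℝ) * W (k-1-(i:ℕ)) ω) r
      = - ∑ t ∈ Finset.Ico (k-r) k, W t ω := by
    intro r hr
    rw [pSum_eq k r hr (fun t => (-1:ℝ) * W (k-1-t) ω)]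
    have : ∑ t ∈ Finset.range r, (-1:ℝ) * W (k-1-t) ω
        = - ∑ t ∈ Finset.range r, W (k-1-t) ω := by
      rw [← Finset.sum_neg_distrib]
      apply Finset.sum_congr rfl; intros; ring
    rw [this, rev_sum (fun t => W t ω) k r hr]
  constructor
  · intro h r h1 h2
    rw [key r h2, neg_lt_zero]
    exact h (k - r) (by omega)
  · intro h i hi
    have := h (k - i) (by omega) (by omega)
    rw [key (k-i) (by omega), neg_lt_zero] at this
    have hki : k - (k - i) = i := by omega
    rwa [hki] at this

lemma Bset_eq (k n : ℕ) (hkn : k ≤ n) :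
    Bset W k n = (fun ω (i : Fin (n-k)) => (1:ℝ) * W (k+(i:ℕ)) ω) ⁻¹' negSet (n-k) := by
  ext ω
  simp only [Bset, Set.mem_setOf_eq, Set.mem_preimage, negSet]
  have key : ∀ r, r ≤ n - k → pSum (n-k) (fun i : Fin (n-k) => (1:ℝ) * W (k+(i:ℕ)) ω) r
      = ∑ t ∈ Finset.Ico k (k+r), W t ω := by
    intro r hr
    rw [pSum_eq (n-k) r hr (fun t => (1:ℝ) * W (k+t) ω)]
    rw [Finset.sum_Ico_eq_sum_range]
    simp
  constructor
  · intro h r h1 h2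
    rw [key r h2]
    exact h (k + r) (by omega) (by omega)
  · intro h j h1 h2
    have := h (j - k) (by omega) (by omega)
    rw [key (j-k) (by omega)] at this
    have : ∑ t ∈ Finset.Ico k (k + (j-k)), W t ω < 0 := this
    rwa [show k + (j - k) = j by omega] at this

lemma measurable_S (hmeas : ∀ i, Measurable (W i)) (k : ℕ) : Measurable (fun ω => ∑ i ∈ Finset.range k, W i ω) :=
  Finset.measurable_sum _ (fun i _ => hmeas i)

lemma measurable_SIco (hmeas : ∀ i, Measurable (W i)) (i j : ℕ) : Measurable (fun ω => ∑ t ∈ Finset.Ico i j, W t ω) :=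
  Finset.measurable_sum _ (fun t _ => hmeas t)

lemma measurableSet_Qset (hmeas : ∀ i, Measurable (W i)) (r : ℕ) : MeasurableSet (Qset W r) := by
  have : Qset W r = ⋂ k, ⋂ (_ : 1 ≤ k), ⋂ (_ : k ≤ r),
      {ω | ∑ i ∈ Finset.range k, W i ω < 0} := by ext ω; simp [Qset]
  rw [this]
  exact MeasurableSet.iInter fun k => MeasurableSet.iInter fun _ =>
    MeasurableSet.iInter fun _ => measurableSet_lt (measurable_S W hmeas k) measurable_const

lemma measurableSet_Aset (hmeas : ∀ i, Measurable (W i)) (k : ℕ) : MeasurableSet (Aset W k) := by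
  have : Aset W k = ⋂ i, ⋂ (_ : i < k), {ω | 0 < ∑ t ∈ Finset.Ico i k, W t ω} := by
    ext ω; simp [Aset]
  rw [this]
  exact MeasurableSet.iInter fun i => MeasurableSet.iInter fun _ =>
    measurableSet_lt measurable_const (measurable_SIco W hmeas i k)

lemma measurableSet_Bset (hmeas : ∀ i, Measurable (W i)) (k n : ℕ) : MeasurableSet (Bset W k n) := by
  have : Bset W k n = ⋂ j, ⋂ (_ : k < j), ⋂ (_ : j ≤ n),
      {ω | ∑ t ∈ Finset.Ico k j, W t ω < 0} := by ext ω; simp [Bset]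
  rw [this]
  exact MeasurableSet.iInter fun j => MeasurableSet.iInter fun _ =>
    MeasurableSet.iInter fun _ => measurableSet_lt (measurable_SIco W hmeas k j) measurable_const

end Events

/-- a window sum of an iid atomless walk vanishes with probability zero -/
lemma window_null {Ω : Type*} [MeasurableSpace Ω] (P : Measure Ω) [IsProbabilityMeasure P]
    (μ : Measure ℝ) [NullSingletonClass μ]
    (W : ℕ → Ω → ℝ) (hmeas : ∀ i, Measurable (W i))
    (hdist : ∀ i, P.map (W i) = μ)
    (hindep : iIndepFun W P)
    (i j : ℕ) (hij : i < j) :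
    P {ω | ∑ t ∈ Finset.Ico i j, W t ω = 0} = 0 := by
  set R : Ω → ℝ := fun ω => ∑ t ∈ Finset.Ico (i+1) j, W t ω with hR
  have hRmeas : Measurable R := Finset.measurable_sum _ (fun t _ => hmeas t)
  have hsum : ∀ ω, ∑ t ∈ Finset.Ico i j, W t ω = W i ω + R ω := by
    intro ω
    rw [Finset.sum_eq_sum_Ico_succ_bot hij (fun t => W t ω)]
  have hfun : (∑ t ∈ Finset.Ico (i+1) j, W t) = R := by
    funext ω; rw [hR]; simp [Finset.sum_apply]
  have hindep' : IndepFun R (W i) P := by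
    have h := hindep.indepFun_finset_sum_of_notMem hmeas
      (s := Finset.Ico (i+1) j) (i := i) (by simp)
    rwa [hfun] at h
  haveI : IsProbabilityMeasure (P.map R) :=
    Measure.isProbabilityMeasure_map hRmeas.aemeasurable
  haveI : IsProbabilityMeasure (P.map (W i)) :=
    Measure.isProbabilityMeasure_map (hmeas i).aemeasurable
  have hmap : P.map (fun ω => (R ω, W i ω)) = (P.map R).prod (P.map (W i)) :=
    (indepFun_iff_map_prod_eq_prod_map_map hRmeas.aemeasurable
      (hmeas i).aemeasurable).mp hindep'
  have hsetm : MeasurableSet {p : ℝ × ℝ | p.1 + p.2 = 0} :=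
    measurableSet_eq_fun (measurable_fst.add measurable_snd) measurable_const
  have hev : {ω | ∑ t ∈ Finset.Ico i j, W t ω = 0}
      = (fun ω => (R ω, W i ω)) ⁻¹' {p : ℝ × ℝ | p.1 + p.2 = 0} := by
    ext ω
    simp only [Set.mem_setOf_eq, Set.mem_preimage, hsum ω]
    constructor <;> intro h <;> linarith
  rw [hev, ← Measure.map_apply (hRmeas.prodMk (hmeas i)) hsetm, hmap,
    Measure.prod_apply hsetm]
  have : ∀ y : ℝ, (P.map (W i)) (Prod.mk y ⁻¹' {p : ℝ × ℝ | p.1 + p.2 = 0}) = 0 := by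
    intro y
    have : (Prod.mk y ⁻¹' {p : ℝ × ℝ | p.1 + p.2 = 0}) = {-y} := by
      ext x
      simp only [Set.mem_preimage, Set.mem_setOf_eq, Set.mem_singleton_iff]
      constructor <;> intro h <;> linarith
    rw [this, hdist i]
    exact measure_singleton _
  simp only [this]
  simp

lemma AB_indep {Ω : Type*} [MeasurableSpace Ω] (P : Measure Ω) [IsProbabilityMeasure P]
    (W : ℕ → Ω → ℝ) (hmeas : ∀ i, Measurable (W i))
    (hindep : iIndepFun W P)
    (k n : ℕ) :
    P (Aset W k ∩ Bset W k n) = P (Aset W k) * P (Bset W k n) := by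
  classical
  set SA : Set (↥(Finset.range k) → ℝ) :=
    {v | ∀ i, i < k → 0 < ∑ t ∈ (Finset.range k).attach, if i ≤ (t:ℕ) then v t else 0} with hSA
  set SB : Set (↥(Finset.Ico k n) → ℝ) :=
    {v | ∀ j, k < j → j ≤ n →
      (∑ t ∈ (Finset.Ico k n).attach, if (t:ℕ) < j then v t else 0) < 0} with hSB
  have hsumA : ∀ (a : Ω) (i : ℕ),
      (∑ t ∈ (Finset.range k).attach, if i ≤ (t:ℕ) then W (t:ℕ) a else 0)
        = ∑ t ∈ Finset.Ico i k, W t a := by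
    intro a i
    rw [Finset.sum_attach (Finset.range k) (fun t => if i ≤ t then W t a else 0),
      ← Finset.sum_filter]
    congr 1
    ext t
    simp only [Finset.mem_filter, Finset.mem_range, Finset.mem_Ico]
    omega
  have hsumB : ∀ (a : Ω) (j : ℕ), j ≤ n →
      (∑ t ∈ (Finset.Ico k n).attach, if (t:ℕ) < j then W (t:ℕ) a else 0)
        = ∑ t ∈ Finset.Ico k j, W t a := by
    intro a j hj
    rw [Finset.sum_attach (Finset.Ico k n) (fun t => if t < j then W t a else 0),
      ← Finset.sum_filter]
    congr 1
    ext t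
    simp only [Finset.mem_filter, Finset.mem_Ico]
    omega
  have hApre : Aset W k = (fun a (t : ↥(Finset.range k)) => W (t:ℕ) a) ⁻¹' SA := by
    ext a
    simp only [Aset, Set.mem_setOf_eq, Set.mem_preimage, hSA]
    constructor
    · intro h i hi; rw [hsumA a i]; exact h i hi
    · intro h i hi; have := h i hi; rwa [hsumA a i] at this
  have hBpre : Bset W k n = (fun a (t : ↥(Finset.Ico k n)) => W (t:ℕ) a) ⁻¹' SB := by
    ext a
    simp only [Bset, Set.mem_setOf_eq, Set.mem_preimage, hSB]
    constructor
    · intro h j h1 h2; rw [hsumB a j h2]; exact h j h1 h2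
    · intro h j h1 h2; have := h j h1 h2; rwa [hsumB a j h2] at this
  have hSAm : MeasurableSet SA := by
    have : SA = ⋂ i, ⋂ (_ : i < k),
        {v : ↥(Finset.range k) → ℝ |
          0 < ∑ t ∈ (Finset.range k).attach, if i ≤ (t:ℕ) then v t else 0} := by
      ext v; simp [hSA]
    rw [this]
    refine MeasurableSet.iInter fun i => MeasurableSet.iInter fun _ =>
      measurableSet_lt measurable_const ?_
    apply Finset.measurable_sum
    intro t _
    by_cases h : i ≤ (t:ℕ)
    · simpa [h] using measurable_pi_apply t
    · simpa [h] using measurable_const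
  have hSBm : MeasurableSet SB := by
    have : SB = ⋂ j, ⋂ (_ : k < j), ⋂ (_ : j ≤ n),
        {v : ↥(Finset.Ico k n) → ℝ |
          (∑ t ∈ (Finset.Ico k n).attach, if (t:ℕ) < j then v t else 0) < 0} := by
      ext v; simp [hSB]
    rw [this]
    refine MeasurableSet.iInter fun j => MeasurableSet.iInter fun _ =>
      MeasurableSet.iInter fun _ => measurableSet_lt ?_ measurable_const
    apply Finset.measurable_sum
    intro t _
    by_cases h : (t:ℕ) < j
    · simpa [h] using measurable_pi_apply t
    · simpa [h] using measurable_const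
  have hdisj : Disjoint (Finset.range k) (Finset.Ico k n) := by
    rw [Finset.disjoint_left]
    intro a ha hb
    simp only [Finset.mem_range] at ha
    simp only [Finset.mem_Ico] at hb
    omega
  have h := hindep.indepFun_finset (Finset.range k) (Finset.Ico k n) hdisj hmeas
  rw [hApre, hBpre]
  exact h.measure_inter_preimage_eq_mul _ _ hSAm hSBm

lemma cc_nonneg (m : ℕ) : 0 ≤ cc m :=
  div_nonneg (le_of_lt (cb_pos m)) (by positivity)

lemma Q_val {Ω : Type*} [MeasurableSpace Ω] (P : Measure Ω) [IsProbabilityMeasure P]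
    (μ : Measure ℝ) [NullSingletonClass μ]
    (hsym : μ.map (fun x => -x) = μ)
    (W : ℕ → Ω → ℝ) (hmeas : ∀ i, Measurable (W i))
    (hdist : ∀ i, P.map (W i) = μ)
    (hindep : iIndepFun W P) :
    ∀ m, P (Qset W m) = ENNReal.ofReal (cc m) := by
  haveI : IsProbabilityMeasure μ := by
    rw [← hdist 0]; exact Measure.isProbabilityMeasure_map (hmeas 0).aemeasurable
  set v : ℕ → ℝ≥0∞ := fun m => P (Qset W m) with hv
  have hQ0 : Qset W 0 = Set.univ := by
    ext ω; simp only [Qset, Set.mem_setOf_eq, Set.mem_univ, iff_true]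
    intro k h1 h2; omega
  have hv0 : v 0 = 1 := by rw [hv]; simp only [hQ0]; exact measure_univ
  have hQpi : ∀ m, m ≠ 0 → v m = Measure.pi (fun _ : Fin m => μ) (negSet m) := by
    intro m hm
    rw [hv]
    simp only [Qset_eq W m]
    exact prob_negSet P μ hsym W hmeas hdist hindep 1 (Or.inl rfl) m hm
      (fun i => (i:ℕ)) Fin.val_injective
  have hA : ∀ k, P (Aset W k) = v k := by
    intro k
    rcases Nat.eq_zero_or_pos k with rfl | hk
    · have : Aset W 0 = Set.univ := by
        ext ω; simp only [Aset, Set.mem_setOf_eq, Set.mem_univ, iff_true]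
        intro i hi; omega
      rw [this, measure_univ, hv0]
    · have hinj : Function.Injective (fun i : Fin k => k - 1 - (i:ℕ)) := by
        intro a b h
        simp only at h
        have ha := a.isLt
        have hb := b.isLt
        exact Fin.ext (by omega)
      rw [Aset_eq W k,
        prob_negSet P μ hsym W hmeas hdist hindep (-1) (Or.inr rfl) k (by omega)
          (fun i : Fin k => k - 1 - (i:ℕ)) hinj,
        ← hQpi k (by omega)]
  have hB : ∀ k n, k ≤ n → P (Bset W k n) = v (n - k) := by
    intro k n hkn
    rcases Nat.eq_zero_or_pos (n - k) with h0 | hpos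
    · have : Bset W k n = Set.univ := by
        ext ω; simp only [Bset, Set.mem_setOf_eq, Set.mem_univ, iff_true]
        intro j h1 h2; omega
      rw [this, measure_univ, h0, hv0]
    · have hinj : Function.Injective (fun i : Fin (n-k) => k + (i:ℕ)) := by
        intro a b h
        simp only [add_right_inj] at h
        exact Fin.ext h
      rw [Bset_eq W k n hkn,
        prob_negSet P μ hsym W hmeas hdist hindep 1 (Or.inl rfl) (n-k) (by omega)
          (fun i : Fin (n-k) => k + (i:ℕ)) hinj,
        ← hQpi (n-k) (by omega)]
  -- partition: sum over the position of the strict maximum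
  have hpart : ∀ n, ∑ k ∈ Finset.range (n+1), P (Aset W k ∩ Bset W k n) = 1 := by
    intro n
    have hMmeas : ∀ k ∈ Finset.range (n+1), MeasurableSet (Aset W k ∩ Bset W k n) :=
      fun k _ => (measurableSet_Aset W hmeas k).inter (measurableSet_Bset W hmeas k n)
    have hdisj : Set.PairwiseDisjoint ↑(Finset.range (n+1))
        (fun k => Aset W k ∩ Bset W k n) := by
      intro k hk l hl hkl
      simp only [Finset.coe_range, Set.mem_Iio] at hk hl
      refine Set.disjoint_left.mpr fun ω hωk hωl => ?_
      rcases lt_or_gt_of_ne hkl with h | h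
      · have h1 := hωk.2 l h (by omega)
        have h2 := hωl.1 k h
        linarith
      · have h1 := hωl.2 k h (by omega)
        have h2 := hωk.1 l h
        linarith
    rw [← measure_biUnion_finset hdisj hMmeas]
    set E : Set Ω := ⋃ i, ⋃ j,
      {ω | i < j ∧ j ≤ n ∧ ∑ t ∈ Finset.Ico i j, W t ω = 0} with hE
    have hEnull : P E = 0 := by
      rw [hE]
      refine measure_iUnion_null fun i => measure_iUnion_null fun j => ?_
      by_cases h : i < j
      · refine measure_mono_null (fun ω hω => hω.2.2) ?_
        exact window_null P μ W hmeas hdist hindep i j h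
      · have : {ω | i < j ∧ j ≤ n ∧ ∑ t ∈ Finset.Ico i j, W t ω = 0} = ∅ := by
          ext ω; simp only [Set.mem_setOf_eq, Set.mem_empty_iff_false, iff_false]
          rintro ⟨h1, _, _⟩; exact h h1
        rw [this]; exact measure_empty
    have hcover : Set.univ ⊆ (⋃ k ∈ Finset.range (n+1), Aset W k ∩ Bset W k n) ∪ E := by
      intro ω _
      by_cases hωE : ω ∈ E
      · exact Or.inr hωE
      · left
        have hnz : ∀ i j, i < j → j ≤ n → ∑ t ∈ Finset.Ico i j, W t ω ≠ 0 := by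
          intro i j h1 h2 h3
          exact hωE (Set.mem_iUnion.mpr ⟨i, Set.mem_iUnion.mpr ⟨j, ⟨h1, h2, h3⟩⟩⟩)
        obtain ⟨k, hk, hmax⟩ := Finset.exists_max_image (Finset.range (n+1))
          (fun r => ∑ t ∈ Finset.range r, W t ω) ⟨0, by simp⟩
        simp only [Finset.mem_range] at hk
        refine Set.mem_biUnion (Finset.mem_range.mpr hk) ⟨?_, ?_⟩
        · intro i hik
          have hle := hmax i (Finset.mem_range.mpr (by omega))
          have hsub : ∑ t ∈ Finset.Ico i k, W t ω
              = ∑ t ∈ Finset.range k, W t ω - ∑ t ∈ Finset.range i, W t ω :=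
            Finset.sum_Ico_eq_sub _ (le_of_lt hik)
          have hne := hnz i k hik (by omega)
          rw [hsub] at hne ⊢
          rcases lt_or_eq_of_le hle with h | h
          · linarith
          · exact absurd (by linarith) hne
        · intro j hkj hjn
          have hle := hmax j (Finset.mem_range.mpr (by omega))
          have hsub : ∑ t ∈ Finset.Ico k j, W t ω
              = ∑ t ∈ Finset.range j, W t ω - ∑ t ∈ Finset.range k, W t ω :=
            Finset.sum_Ico_eq_sub _ (le_of_lt hkj)
          have hne := hnz k j hkj hjn
          rw [hsub] at hne ⊢
          rcases lt_or_eq_of_le hle with h | h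
          · linarith
          · exact absurd (by linarith) hne
    have h1 : (1:ℝ≥0∞) ≤ P (⋃ k ∈ Finset.range (n+1), Aset W k ∩ Bset W k n) := by
      calc (1:ℝ≥0∞) = P Set.univ := measure_univ.symm
        _ ≤ P ((⋃ k ∈ Finset.range (n+1), Aset W k ∩ Bset W k n) ∪ E) :=
            measure_mono hcover
        _ ≤ P (⋃ k ∈ Finset.range (n+1), Aset W k ∩ Bset W k n) + P E :=
            measure_union_le _ _
        _ = P (⋃ k ∈ Finset.range (n+1), Aset W k ∩ Bset W k n) := by
            rw [hEnull, add_zero]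
    exact le_antisymm prob_le_one h1
  -- convolution identity
  have hconv : ∀ n, ∑ k ∈ Finset.range (n+1), v k * v (n-k) = 1 := by
    intro n
    rw [← hpart n]
    apply Finset.sum_congr rfl
    intro k hk
    simp only [Finset.mem_range] at hk
    rw [AB_indep P W hmeas hindep k n, hA k, hB k n (by omega)]
  -- pass to the reals
  set r : ℕ → ℝ := fun m => (v m).toReal with hr
  have hvne : ∀ m, v m ≠ ⊤ := fun m => measure_ne_top P _
  have hr0 : r 0 = 1 := by rw [hr]; simp [hv0]
  have hrconv : ∀ n, ∑ k ∈ Finset.range (n+1), r k * r (n-k) = 1 := by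
    intro n
    have h := congrArg ENNReal.toReal (hconv n)
    rw [ENNReal.toReal_sum (fun k _ => ENNReal.mul_ne_top (hvne k) (hvne (n-k)))] at h
    simpa only [ENNReal.toReal_mul, ENNReal.toReal_one] using h
  have hreq := conv_unique r hr0 hrconv
  intro m
  have h1 : v m = ENNReal.ofReal (r m) := (ENNReal.ofReal_toReal (hvne m)).symm
  rw [hreq m] at h1
  exact h1

/-- **Sparre Andersen first-passage probability.** For a random walk
`S k = ∑_{i<k} W i` with iid increments whose common law `μ` is symmetric and atomless,
the probability that the walk stays strictly negative up to step `n` and is nonnegative at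
step `n+1` equals `catalan n / 2^(2n+1)`. -/
theorem first_passage_probability_eq_catalan
    {Ω : Type*} [MeasurableSpace Ω] (P : Measure Ω) [IsProbabilityMeasure P]
    (μ : Measure ℝ) [NullSingletonClass μ]
    (hsym : μ.map (fun x => -x) = μ)
    (W : ℕ → Ω → ℝ)
    (hmeas : ∀ i, Measurable (W i))
    (hdist : ∀ i, P.map (W i) = μ)
    (hindep : iIndepFun W P)
    (n : ℕ) :
    P {ω | (∀ k, 1 ≤ k → k ≤ n → (∑ i ∈ Finset.range k, W i ω) < 0) ∧
        0 ≤ ∑ i ∈ Finset.range (n + 1), W i ω}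
      = ENNReal.ofReal ((catalan n : ℝ) / 2 ^ (2 * n + 1)) := by
  have hset : {ω | (∀ k, 1 ≤ k → k ≤ n → (∑ i ∈ Finset.range k, W i ω) < 0) ∧
        0 ≤ ∑ i ∈ Finset.range (n + 1), W i ω}
      = Qset W n \ Qset W (n+1) := by
    ext ω
    simp only [Set.mem_setOf_eq, Set.mem_diff, Qset]
    constructor
    · rintro ⟨h1, h2⟩
      refine ⟨h1, fun h => ?_⟩
      exact absurd (h (n+1) (by omega) le_rfl) (not_lt.mpr h2)
    · rintro ⟨h1, h2⟩
      refine ⟨h1, ?_⟩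
      by_contra hcon
      push_neg at hcon
      apply h2
      intro k hk1 hk2
      rcases Nat.lt_or_ge k (n+1) with h | h
      · exact h1 k hk1 (by omega)
      · have : k = n + 1 := by omega
        subst this
        exact hcon
  have hsub : Qset W (n+1) ⊆ Qset W n := by
    intro ω h k h1 h2
    exact h k h1 (by omega)
  have hQn := Q_val P μ hsym W hmeas hdist hindep n
  have hQn1 := Q_val P μ hsym W hmeas hdist hindep (n+1)
  rw [hset, measure_diff hsub (measurableSet_Qset W hmeas (n+1)).nullMeasurableSet
    (measure_ne_top P _), hQn, hQn1,
    ← ENNReal.ofReal_sub _ (cc_nonneg (n+1)), cc_diff n]
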